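/- Let D be a self-adjoint (possibly unbounded) operator on a Hilbert space and H a bounded self-adjoint operator which preserves Dom(D) such that [D,H] extends to a bounded operator with norm b. Then for every z ∈ ℂ \ ℝ and every ψ ∈ Dom(D), the vector (H−z)^{-1}ψ lies in Dom(D) and ‖D(H−z)^{-1}ψ‖ ≤ |Im z|^{-1}‖Dψ‖ + |Im z|^{-2} b (|Im z| + |i+z|) ‖ψ‖, using the identity [H,D](H−z)^{-1} = [H,D](H+i)^{-1}(1 + (i+z)(H−z)^{-1}). -/

import Mathlib

local notation "⟪" x ", " y "⟫" => @inner ℂ _ _ x y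

section Aux

variable {E : Type*} [NormedAddCommGroup E] [InnerProductSpace ℂ E] [CompleteSpace E]

set_option linter.unusedSectionVars false

theorem lem_lower' (H : E →L[ℂ] E) (hH : IsSelfAdjoint H) (w : ℂ) (x : E) :
    |w.im| * ‖x‖ ≤ ‖H x - w • x‖ := by
  rcases eq_or_ne x 0 with rfl | hx
  · simp
  have hadj : ∀ u v : E, ⟪H u, v⟫ = ⟪u, H v⟫ := by
    intro u v
    conv_lhs => rw [← (ContinuousLinearMap.isSelfAdjoint_iff'.mp hH)]
    exact ContinuousLinearMap.adjoint_inner_left H v u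
  have hreal : (⟪x, H x⟫).im = 0 := by
    have h1 : (starRingEnd ℂ) ⟪x, H x⟫ = ⟪x, H x⟫ := by
      rw [inner_conj_symm]; exact hadj x x
    exact Complex.conj_eq_iff_im.mp h1
  have hns : (⟪x, x⟫ : ℂ) = (‖x‖:ℂ) ^ 2 := inner_self_eq_norm_sq_to_K x
  have him : (⟪x, H x - w • x⟫).im = - (w.im * ‖x‖ ^ 2) := by
    rw [inner_sub_right, inner_smul_right, Complex.sub_im, Complex.mul_im, hns, hreal]
    rw [← Complex.ofReal_pow, Complex.ofReal_re, Complex.ofReal_im]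
    ring
  have h3 : |w.im| * ‖x‖ ^ 2 ≤ ‖(⟪x, H x - w • x⟫ : ℂ)‖ := by
    calc |w.im| * ‖x‖ ^ 2 = |(⟪x, H x - w • x⟫).im| := by
          rw [him, abs_neg, abs_mul, abs_of_nonneg (sq_nonneg ‖x‖)]
      _ ≤ ‖(⟪x, H x - w • x⟫ : ℂ)‖ := by
          exact Complex.abs_im_le_norm _
  have h4 : ‖(⟪x, H x - w • x⟫ : ℂ)‖ ≤ ‖x‖ * ‖H x - w • x‖ := norm_inner_le_norm x _
  have hxpos : (0:ℝ) < ‖x‖ := norm_pos_iff.mpr hx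
  nlinarith [abs_nonneg w.im]

theorem lem_exists' (H : E →L[ℂ] E) (hH : IsSelfAdjoint H) (w : ℂ) (hw : w.im ≠ 0) :
    ∃ A : E →L[ℂ] E, (H - w • 1) * A = 1 ∧ A * (H - w • 1) = 1 := by
  have hns : w ∉ spectrum ℂ H := fun hmem => hw (hH.im_eq_zero_of_mem_spectrum hmem)
  have hunit : IsUnit ((algebraMap ℂ (E →L[ℂ] E)) w - H) := spectrum.notMem_iff.mp hns
  obtain ⟨u, hu⟩ := hunit
  refine ⟨-(↑u⁻¹), ?_, ?_⟩
  · have : H - w • 1 = -(u : E →L[ℂ] E) := by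
      rw [hu, Algebra.algebraMap_eq_smul_one]; exact (neg_sub _ _).symm
    rw [this, neg_mul_neg]; exact u.mul_inv
  · have : H - w • 1 = -(u : E →L[ℂ] E) := by
      rw [hu, Algebra.algebraMap_eq_smul_one]; exact (neg_sub _ _).symm
    rw [this, neg_mul_neg]; exact u.inv_mul

theorem lem_norm_inv' (H : E →L[ℂ] E) (hH : IsSelfAdjoint H) (w : ℂ) (hw : w.im ≠ 0)
    (A : E →L[ℂ] E) (hA1 : (H - w • 1) * A = 1) (x : E) :
    ‖A x‖ ≤ |w.im|⁻¹ * ‖x‖ := by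
  have h0 : (H - w • 1) (A x) = x := by
    have := congrArg (fun T : E →L[ℂ] E => T x) hA1
    simpa [ContinuousLinearMap.mul_apply] using this
  have h1 : H (A x) - w • (A x) = x := by
    simpa [ContinuousLinearMap.sub_apply, ContinuousLinearMap.smul_apply,
      ContinuousLinearMap.one_apply] using h0
  have h2 := lem_lower' H hH w (A x)
  rw [h1] at h2
  have hpos : (0:ℝ) < |w.im| := abs_pos.mpr hw
  calc ‖A x‖ = |w.im|⁻¹ * (|w.im| * ‖A x‖) := by field_simp
    _ ≤ |w.im|⁻¹ * ‖x‖ := by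
        apply mul_le_mul_of_nonneg_left h2 (inv_nonneg.mpr hpos.le)

theorem lem_closed' (dom : Submodule ℂ E) (Dop : dom →ₗ[ℂ] E)
    (hsymm : ∀ ψ φ : dom, ⟪Dop ψ, (φ : E)⟫ = ⟪(ψ : E), Dop φ⟫)
    (hmax : ∀ y w : E, (∀ ψ : dom, ⟪Dop ψ, y⟫ = ⟪(ψ : E), w⟫) → y ∈ dom)
    (u : ℕ → dom) (y v : E)
    (hy : Filter.Tendsto (fun n => (u n : E)) Filter.atTop (nhds y))
    (hv : Filter.Tendsto (fun n => Dop (u n)) Filter.atTop (nhds v)) :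
    y ∈ dom := by
  apply hmax y v
  intro ψ
  have h1 : Filter.Tendsto (fun n => ⟪Dop ψ, (u n : E)⟫) Filter.atTop (nhds ⟪Dop ψ, y⟫) :=
    Filter.Tendsto.inner tendsto_const_nhds hy
  have h2 : Filter.Tendsto (fun n => ⟪(ψ : E), Dop (u n)⟫) Filter.atTop (nhds ⟪(ψ : E), v⟫) :=
    Filter.Tendsto.inner tendsto_const_nhds hv
  have h3 : (fun n => ⟪Dop ψ, (u n : E)⟫) = fun n => ⟪(ψ : E), Dop (u n)⟫ := by
    funext n; exact hsymm ψ (u n)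
  rw [h3] at h1
  exact tendsto_nhds_unique h1 h2

theorem lem_bound' (dom : Submodule ℂ E) (Dop : dom →ₗ[ℂ] E)
    (H : E →L[ℂ] E) (hH : IsSelfAdjoint H) (hpres : ∀ x ∈ dom, H x ∈ dom) (b : ℝ)
    (hcomm : ∀ ψ : dom, ‖Dop ⟨H ψ, hpres _ ψ.2⟩ - H (Dop ψ)‖ ≤ b * ‖(ψ : E)‖)
    (w : ℂ) (hw : w.im ≠ 0) (A : E →L[ℂ] E) (hA1 : (H - w • 1) * A = 1)
    (hpresA : ∀ φ : dom, A (φ : E) ∈ dom) (ψ : dom) :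
    ‖Dop ⟨A (ψ : E), hpresA ψ⟩‖ ≤
      |w.im|⁻¹ * ‖Dop ψ‖ + |w.im|⁻¹ ^ 2 * |b| * ‖(ψ : E)‖ := by
  set χ : dom := ⟨A (ψ : E), hpresA ψ⟩ with hχ
  set Hχ : dom := ⟨H (χ : E), hpres _ χ.2⟩ with hHχ
  have e0 : H (χ : E) - w • (χ : E) = (ψ : E) := by
    have := congrArg (fun T : E →L[ℂ] E => T (ψ : E)) hA1
    simpa [ContinuousLinearMap.mul_apply, ContinuousLinearMap.sub_apply,
      ContinuousLinearMap.smul_apply, ContinuousLinearMap.one_apply] using this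
  have e1 : Hχ - w • χ = ψ := by
    apply Subtype.ext
    simpa using e0
  have e2 : Dop Hχ - w • Dop χ = Dop ψ := by
    rw [← map_smul, ← map_sub, e1]
  have key : H (Dop χ) - w • Dop χ = Dop ψ - (Dop Hχ - H (Dop χ)) := by
    rw [← e2]; abel
  have h2 := lem_lower' H hH w (Dop χ)
  rw [key] at h2
  have h3 : ‖Dop ψ - (Dop Hχ - H (Dop χ))‖ ≤ ‖Dop ψ‖ + |b| * ‖(χ : E)‖ := by
    have hc := hcomm χ
    have hc' : ‖Dop Hχ - H (Dop χ)‖ ≤ |b| * ‖(χ : E)‖ :=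
      hc.trans (mul_le_mul_of_nonneg_right (le_abs_self b) (norm_nonneg _))
    calc ‖Dop ψ - (Dop Hχ - H (Dop χ))‖ ≤ ‖Dop ψ‖ + ‖Dop Hχ - H (Dop χ)‖ := norm_sub_le _ _
      _ ≤ ‖Dop ψ‖ + |b| * ‖(χ : E)‖ := by linarith
  have h4 : ‖(χ : E)‖ ≤ |w.im|⁻¹ * ‖(ψ : E)‖ := lem_norm_inv' H hH w hw A hA1 _
  have hpos : (0:ℝ) < |w.im| := abs_pos.mpr hw
  have h5 : |w.im| * ‖Dop χ‖ ≤ ‖Dop ψ‖ + |b| * (|w.im|⁻¹ * ‖(ψ : E)‖) := by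
    have := mul_le_mul_of_nonneg_left h4 (abs_nonneg b)
    linarith
  calc ‖Dop χ‖ = |w.im|⁻¹ * (|w.im| * ‖Dop χ‖) := by field_simp
    _ ≤ |w.im|⁻¹ * (‖Dop ψ‖ + |b| * (|w.im|⁻¹ * ‖(ψ : E)‖)) :=
        mul_le_mul_of_nonneg_left h5 (inv_nonneg.mpr hpos.le)
    _ = |w.im|⁻¹ * ‖Dop ψ‖ + |w.im|⁻¹ ^ 2 * |b| * ‖(ψ : E)‖ := by ring

theorem lem_seed' (dom : Submodule ℂ E) (Dop : dom →ₗ[ℂ] E)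
    (hsymm : ∀ ψ φ : dom, ⟪Dop ψ, (φ : E)⟫ = ⟪(ψ : E), Dop φ⟫)
    (hmax : ∀ y w : E, (∀ ψ : dom, ⟪Dop ψ, y⟫ = ⟪(ψ : E), w⟫) → y ∈ dom)
    (H : E →L[ℂ] E) (hpres : ∀ x ∈ dom, H x ∈ dom) (b : ℝ)
    (hcomm : ∀ ψ : dom, ‖Dop ⟨H ψ, hpres _ ψ.2⟩ - H (Dop ψ)‖ ≤ b * ‖(ψ : E)‖)
    (w : ℂ) (hw : ‖H‖ + |b| < ‖w‖)
    (A : E →L[ℂ] E) (hA2 : A * (H - w • 1) = 1) (ψ : dom) :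
    A (ψ : E) ∈ dom := by
  classical
  set M : ℝ := ‖H‖ + |b| with hM
  have hM0 : 0 ≤ M := by positivity
  have hwpos : (0:ℝ) < ‖w‖ := lt_of_le_of_lt hM0 hw
  have hw0 : w ≠ 0 := by
    intro h; rw [h] at hwpos; simp at hwpos
  -- iterated H applied to ψ, inside dom
  set hp : ℕ → dom := fun n => Nat.rec ψ (fun _ x => ⟨H (x : E), hpres _ x.2⟩) n with hhp
  have hp0 : hp 0 = ψ := rfl
  have hpS : ∀ k, hp (k + 1) = ⟨H (hp k : E), hpres _ (hp k).2⟩ := fun k => rfl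
  set s : ℝ := ‖Dop ψ‖ + ‖(ψ : E)‖ with hs
  have hs0 : 0 ≤ s := by positivity
  have hb1 : ∀ k, ‖(hp k : E)‖ ≤ M ^ k * ‖(ψ : E)‖ := by
    intro k; induction k with
    | zero => simp [hp0]
    | succ k ih =>
      rw [hpS k]
      calc ‖H (hp k : E)‖ ≤ ‖H‖ * ‖(hp k : E)‖ := H.le_opNorm _
        _ ≤ M * (M ^ k * ‖(ψ : E)‖) := by
            apply mul_le_mul (le_add_of_nonneg_right (abs_nonneg b)) ih (norm_nonneg _) hM0
        _ = M ^ (k+1) * ‖(ψ : E)‖ := by ring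
  have hb2 : ∀ k, ‖Dop (hp k)‖ ≤ M ^ k * s := by
    intro k; induction k with
    | zero =>
      simp only [hp0, pow_zero, one_mul, hs]
      exact le_add_of_nonneg_right (norm_nonneg _)
    | succ k ih =>
      have hc := hcomm (hp k)
      have hnk : ‖(hp k : E)‖ ≤ M ^ k * ‖(ψ : E)‖ := hb1 k
      have hHD : ‖H (Dop (hp k))‖ ≤ ‖H‖ * (M ^ k * s) :=
        (H.le_opNorm _).trans (mul_le_mul_of_nonneg_left ih (norm_nonneg H))
      have hcc : ‖Dop (hp (k+1)) - H (Dop (hp k))‖ ≤ |b| * (M ^ k * ‖(ψ : E)‖) := by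
        rw [hpS k]
        calc ‖Dop ⟨H (hp k : E), hpres _ (hp k).2⟩ - H (Dop (hp k))‖ ≤ b * ‖(hp k : E)‖ := hc
          _ ≤ |b| * (M ^ k * ‖(ψ : E)‖) := by
              apply mul_le_mul (le_abs_self b) hnk (norm_nonneg _) (abs_nonneg b)
      calc ‖Dop (hp (k+1))‖
          = ‖(Dop (hp (k+1)) - H (Dop (hp k))) + H (Dop (hp k))‖ := by rw [sub_add_cancel]
        _ ≤ ‖Dop (hp (k+1)) - H (Dop (hp k))‖ + ‖H (Dop (hp k))‖ := norm_add_le _ _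
        _ ≤ |b| * (M ^ k * ‖(ψ : E)‖) + ‖H‖ * (M ^ k * s) := by linarith
        _ ≤ M ^ (k+1) * s := by
            have h1 : ‖(ψ : E)‖ ≤ s := le_add_of_nonneg_left (norm_nonneg _)
            have h2 : (0:ℝ) ≤ M ^ k := pow_nonneg hM0 k
            have h3 : |b| * (M ^ k * ‖(ψ : E)‖) ≤ |b| * (M ^ k * s) := by
              apply mul_le_mul_of_nonneg_left _ (abs_nonneg b)
              exact mul_le_mul_of_nonneg_left h1 h2
            have : |b| * (M ^ k * s) + ‖H‖ * (M ^ k * s) = M ^ (k+1) * s := by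
              simp [hM]; ring
            linarith
  -- partial sums
  set u : ℕ → dom := fun n => -∑ k ∈ Finset.range n, (w⁻¹ ^ (k+1)) • hp k with hu
  have hucoe : ∀ n, ((u n : E)) = -∑ k ∈ Finset.range n, (w⁻¹ ^ (k+1)) • (hp k : E) := by
    intro n; simp [hu]
  have hid : ∀ n, H (u n : E) - w • (u n : E) = (ψ : E) - w⁻¹ ^ n • (hp n : E) := by
    intro n; induction n with
    | zero => simp [hucoe, hp0]
    | succ n ih =>
      have e1 : ((u (n+1) : E)) = (u n : E) - w⁻¹ ^ (n+1) • (hp n : E) := by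
        rw [hucoe, hucoe, Finset.sum_range_succ]; abel
      have e2 : H ((u (n+1) : E)) = H (u n : E) - w⁻¹ ^ (n+1) • H (hp n : E) := by
        rw [e1]; simp
      have e3 : H (hp n : E) = ((hp (n+1) : E)) := by rw [hpS n]
      have e4 : w • (w⁻¹ ^ (n+1) • (hp n : E)) = w⁻¹ ^ n • (hp n : E) := by
        rw [smul_smul]
        congr 1
        rw [pow_succ]
        field_simp
      have key : H ((u (n+1) : E)) - w • ((u (n+1) : E)) =
          (H (u n : E) - w • (u n : E)) - w⁻¹ ^ (n+1) • ((hp (n+1) : E))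
            + w⁻¹ ^ n • ((hp n : E)) := by
        rw [e2, e3, e1, smul_sub, e4]; abel
      rw [key, ih]; abel
  -- convergence of u to A ψ
  have hA2' : ∀ x : E, A (H x - w • x) = x := by
    intro x
    have := congrArg (fun T : E →L[ℂ] E => T x) hA2
    simpa [ContinuousLinearMap.mul_apply, ContinuousLinearMap.sub_apply,
      ContinuousLinearMap.smul_apply, ContinuousLinearMap.one_apply] using this
  have hue : ∀ n, ((u n : E)) = A (ψ : E) - A (w⁻¹ ^ n • (hp n : E)) := by
    intro n
    have := hA2' (u n : E)
    rw [hid n] at this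
    rw [← this, map_sub]
  set r : ℝ := M / ‖w‖ with hr
  have hr0 : 0 ≤ r := div_nonneg hM0 hwpos.le
  have hr1 : r < 1 := (div_lt_one hwpos).mpr hw
  have hgeo : Filter.Tendsto (fun n : ℕ => ‖A‖ * ‖(ψ : E)‖ * r ^ n) Filter.atTop (nhds 0) := by
    have := tendsto_pow_atTop_nhds_zero_of_lt_one hr0 hr1
    simpa using this.const_mul (‖A‖ * ‖(ψ : E)‖)
  have hbnd : ∀ n, ‖(u n : E) - A (ψ : E)‖ ≤ ‖A‖ * ‖(ψ : E)‖ * r ^ n := by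
    intro n
    rw [hue n]
    have e : A (ψ : E) - A (w⁻¹ ^ n • (hp n : E)) - A (ψ : E) = -(A (w⁻¹ ^ n • (hp n : E))) := by
      abel
    rw [e, norm_neg]
    calc ‖A (w⁻¹ ^ n • (hp n : E))‖ ≤ ‖A‖ * ‖w⁻¹ ^ n • (hp n : E)‖ := A.le_opNorm _
      _ ≤ ‖A‖ * ((‖w‖)⁻¹ ^ n * (M ^ n * ‖(ψ : E)‖)) := by
          apply mul_le_mul_of_nonneg_left _ (norm_nonneg A)
          rw [norm_smul, norm_pow, norm_inv]
          apply mul_le_mul_of_nonneg_left (hb1 n) (by positivity)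
      _ = ‖A‖ * ‖(ψ : E)‖ * r ^ n := by
          rw [hr, div_pow, div_eq_mul_inv, ← inv_pow]
          ring
  have hy : Filter.Tendsto (fun n => (u n : E)) Filter.atTop (nhds (A (ψ : E))) := by
    rw [← tendsto_sub_nhds_zero_iff]
    exact squeeze_zero_norm hbnd hgeo
  -- convergence of Dop (u n)
  have hsum : Summable (fun k : ℕ => (w⁻¹ ^ (k+1)) • Dop (hp k)) := by
    apply Summable.of_norm_bounded (g := fun k => ((‖w‖)⁻¹ * s) * r ^ k)
    · exact (summable_geometric_of_lt_one hr0 hr1).mul_left _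
    · intro k
      rw [norm_smul, norm_pow, norm_inv]
      calc (‖w‖)⁻¹ ^ (k+1) * ‖Dop (hp k)‖
          ≤ (‖w‖)⁻¹ ^ (k+1) * (M ^ k * s) := by
            apply mul_le_mul_of_nonneg_left (hb2 k) (by positivity)
        _ = ((‖w‖)⁻¹ * s) * r ^ k := by
            rw [hr, div_pow, div_eq_mul_inv, ← inv_pow, pow_succ]
            ring
  have hDu : ∀ n, Dop (u n) = -∑ k ∈ Finset.range n, (w⁻¹ ^ (k+1)) • Dop (hp k) := by
    intro n
    rw [hu]
    simp [map_neg, map_sum, map_smul]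
  have hv : Filter.Tendsto (fun n => Dop (u n))
      Filter.atTop (nhds (-(∑' k, (w⁻¹ ^ (k+1)) • Dop (hp k)))) := by
    have := hsum.hasSum.tendsto_sum_nat
    have h2 := this.neg
    convert h2 using 1
    funext n
    exact hDu n
  exact lem_closed' dom Dop hsymm hmax u (A (ψ : E)) _ hy hv

theorem lem_step' (dom : Submodule ℂ E) (Dop : dom →ₗ[ℂ] E)
    (hsymm : ∀ ψ φ : dom, ⟪Dop ψ, (φ : E)⟫ = ⟪(ψ : E), Dop φ⟫)
    (hmax : ∀ y w : E, (∀ ψ : dom, ⟪Dop ψ, y⟫ = ⟪(ψ : E), w⟫) → y ∈ dom)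
    (H : E →L[ℂ] E) (hH : IsSelfAdjoint H) (hpres : ∀ x ∈ dom, H x ∈ dom) (b : ℝ)
    (hcomm : ∀ ψ : dom, ‖Dop ⟨H ψ, hpres _ ψ.2⟩ - H (Dop ψ)‖ ≤ b * ‖(ψ : E)‖)
    (w w' : ℂ) (hw' : w'.im ≠ 0)
    (hr : ‖w - w'‖ * |w'.im|⁻¹ ≤ 1/2)
    (A' : E →L[ℂ] E) (hA'1 : (H - w' • 1) * A' = 1)
    (hpresA' : ∀ φ : dom, A' (φ : E) ∈ dom)
    (A : E →L[ℂ] E) (hA2 : A * (H - w • 1) = 1) (ψ : dom) :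
    A (ψ : E) ∈ dom := by
  classical
  set a : ℝ := |w'.im|⁻¹ with ha
  have ha0 : 0 ≤ a := inv_nonneg.mpr (abs_nonneg _)
  set c : ℂ := w - w' with hc
  have hca : ‖c‖ * a ≤ 1/2 := hr
  -- iterates of A'
  set pw : ℕ → dom := fun n => Nat.rec ψ (fun _ x => ⟨A' (x : E), hpresA' x⟩) n with hpw
  have pw0 : pw 0 = ψ := rfl
  have pwS : ∀ k, pw (k + 1) = ⟨A' (pw k : E), hpresA' (pw k)⟩ := fun k => rfl
  have hA'app : ∀ x : E, H (A' x) - w' • (A' x) = x := by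
    intro x
    have := congrArg (fun T : E →L[ℂ] E => T x) hA'1
    simpa [ContinuousLinearMap.mul_apply, ContinuousLinearMap.sub_apply,
      ContinuousLinearMap.smul_apply, ContinuousLinearMap.one_apply] using this
  have hb1 : ∀ k, ‖(pw k : E)‖ ≤ a ^ k * ‖(ψ : E)‖ := by
    intro k; induction k with
    | zero => simp [pw0]
    | succ k ih =>
      rw [pwS k]
      calc ‖A' (pw k : E)‖ ≤ a * ‖(pw k : E)‖ := lem_norm_inv' H hH w' hw' A' hA'1 _
        _ ≤ a * (a ^ k * ‖(ψ : E)‖) := mul_le_mul_of_nonneg_left ih ha0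
        _ = a ^ (k+1) * ‖(ψ : E)‖ := by ring
  have hb2 : ∀ k, ‖Dop (pw k)‖ ≤ a ^ k * ‖Dop ψ‖ + k * a ^ (k+1) * |b| * ‖(ψ : E)‖ := by
    intro k; induction k with
    | zero => simp [pw0]
    | succ k ih =>
      have step := lem_bound' dom Dop H hH hpres b hcomm w' hw' A' hA'1 hpresA' (pw k)
      rw [← pwS k] at step
      calc ‖Dop (pw (k+1))‖ ≤ a * ‖Dop (pw k)‖ + a ^ 2 * |b| * ‖(pw k : E)‖ := step
        _ ≤ a * (a ^ k * ‖Dop ψ‖ + k * a ^ (k+1) * |b| * ‖(ψ : E)‖)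
              + a ^ 2 * |b| * (a ^ k * ‖(ψ : E)‖) := by
            have t1 := mul_le_mul_of_nonneg_left ih ha0
            have t2 := mul_le_mul_of_nonneg_left (hb1 k) (by positivity : (0:ℝ) ≤ a ^ 2 * |b|)
            linarith
        _ = a ^ (k+1) * ‖Dop ψ‖ + ((k:ℝ)+1) * a ^ (k+2) * |b| * ‖(ψ : E)‖ := by
            push_cast; ring
        _ = ((k:ℕ)+1 : ℕ) * a ^ ((k+1)+1) * |b| * ‖(ψ : E)‖ + a ^ (k+1) * ‖Dop ψ‖ := by
            push_cast; ring
        _ = a ^ (k+1) * ‖Dop ψ‖ + ((k:ℕ)+1 : ℕ) * a ^ ((k+1)+1) * |b| * ‖(ψ : E)‖ := by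
            ring
  -- partial sums
  set u : ℕ → dom := fun n => ∑ k ∈ Finset.range n, (c ^ k) • pw (k+1) with hu
  have hucoe : ∀ n, ((u n : E)) = ∑ k ∈ Finset.range n, (c ^ k) • (pw (k+1) : E) := by
    intro n; simp [hu]
  have hid : ∀ n, H (u n : E) - w • (u n : E) = (ψ : E) - c ^ n • (pw n : E) := by
    intro n; induction n with
    | zero => simp [hucoe, pw0]
    | succ n ih =>
      have e1 : ((u (n+1) : E)) = (u n : E) + c ^ n • (pw (n+1) : E) := by
        rw [hucoe, hucoe, Finset.sum_range_succ]
      have e2 : (pw (n+1) : E) = A' (pw n : E) := by rw [pwS n]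
      have e3 : H (c ^ n • (pw (n+1) : E)) - w • (c ^ n • (pw (n+1) : E))
          = c ^ n • (pw n : E) - c ^ (n+1) • (pw (n+1) : E) := by
        have h4 : H (A' (pw n : E)) - w • (A' (pw n : E))
            = (pw n : E) - c • (pw (n+1) : E) := by
          have h5 := hA'app (pw n : E)
          have : H (A' (pw n : E)) - w • (A' (pw n : E))
              = (H (A' (pw n : E)) - w' • (A' (pw n : E))) - c • (A' (pw n : E)) := by
            rw [hc, sub_smul]; abel
          rw [this, h5, e2]
        rw [e2, map_smul, smul_comm w (c ^ n), ← smul_sub, h4, smul_sub, smul_smul, ← pow_succ,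
          ← e2]
      have key : H ((u (n+1) : E)) - w • ((u (n+1) : E))
          = (H (u n : E) - w • (u n : E))
            + (c ^ n • (pw n : E) - c ^ (n+1) • (pw (n+1) : E)) := by
        rw [e1, map_add, smul_add, ← e3]; abel
      rw [key, ih]; abel
  -- convergence to A ψ
  have hA2' : ∀ x : E, A (H x - w • x) = x := by
    intro x
    have := congrArg (fun T : E →L[ℂ] E => T x) hA2
    simpa [ContinuousLinearMap.mul_apply, ContinuousLinearMap.sub_apply,
      ContinuousLinearMap.smul_apply, ContinuousLinearMap.one_apply] using this
  have hue : ∀ n, ((u n : E)) = A (ψ : E) - A (c ^ n • (pw n : E)) := by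
    intro n
    have := hA2' (u n : E)
    rw [hid n] at this
    rw [← this, map_sub]
  have hhalf : ∀ n : ℕ, ‖c‖ ^ n * (a ^ n * ‖(ψ : E)‖) ≤ (1/2:ℝ) ^ n * ‖(ψ : E)‖ := by
    intro n
    have h1 : (‖c‖ * a) ^ n ≤ (1/2:ℝ) ^ n :=
      pow_le_pow_left₀ (by positivity) hca n
    calc ‖c‖ ^ n * (a ^ n * ‖(ψ : E)‖) = (‖c‖ * a) ^ n * ‖(ψ : E)‖ := by
          rw [mul_pow]; ring
      _ ≤ (1/2:ℝ) ^ n * ‖(ψ : E)‖ := mul_le_mul_of_nonneg_right h1 (norm_nonneg _)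
  have hgeo : Filter.Tendsto (fun n : ℕ => ‖A‖ * ((1/2:ℝ) ^ n * ‖(ψ : E)‖))
      Filter.atTop (nhds 0) := by
    have h0 := tendsto_pow_atTop_nhds_zero_of_lt_one (by norm_num : (0:ℝ) ≤ 1/2)
      (by norm_num : (1/2:ℝ) < 1)
    have := (h0.mul_const ‖(ψ : E)‖).const_mul ‖A‖
    simpa using this
  have hbnd : ∀ n, ‖(u n : E) - A (ψ : E)‖ ≤ ‖A‖ * ((1/2:ℝ) ^ n * ‖(ψ : E)‖) := by
    intro n
    rw [hue n]
    have e : A (ψ : E) - A (c ^ n • (pw n : E)) - A (ψ : E) = -(A (c ^ n • (pw n : E))) := by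
      abel
    rw [e, norm_neg]
    calc ‖A (c ^ n • (pw n : E))‖ ≤ ‖A‖ * ‖c ^ n • (pw n : E)‖ := A.le_opNorm _
      _ ≤ ‖A‖ * ((1/2:ℝ) ^ n * ‖(ψ : E)‖) := by
          apply mul_le_mul_of_nonneg_left _ (norm_nonneg A)
          rw [norm_smul, norm_pow]
          exact le_trans (mul_le_mul_of_nonneg_left (hb1 n) (by positivity)) (hhalf n)
  have hy : Filter.Tendsto (fun n => (u n : E)) Filter.atTop (nhds (A (ψ : E))) := by
    rw [← tendsto_sub_nhds_zero_iff]
    exact squeeze_zero_norm hbnd hgeo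
  -- convergence of Dop (u n)
  have hsum : Summable (fun k : ℕ => (c ^ k) • Dop (pw (k+1))) := by
    set G : ℕ → ℝ := fun k => (a * ‖Dop ψ‖ + a^2 * |b| * ‖(ψ : E)‖) * (1/2:ℝ) ^ k
        + (a^2 * |b| * ‖(ψ : E)‖) * ((k:ℝ) * (1/2:ℝ) ^ k) with hG
    have hGsum : Summable G := by
      apply Summable.add
      · exact (summable_geometric_of_lt_one (by norm_num) (by norm_num)).mul_left _
      · apply Summable.mul_left
        have h7 : ‖(1/2:ℝ)‖ < 1 := by
          rw [Real.norm_eq_abs]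
          exact abs_lt.mpr ⟨by norm_num, by norm_num⟩
        have := summable_pow_mul_geometric_of_norm_lt_one (R := ℝ) 1 h7
        simpa using this
    apply Summable.of_norm_bounded (g := G) hGsum
    intro k
    rw [norm_smul, norm_pow]
    have h1 : ‖Dop (pw (k+1))‖ ≤ a ^ (k+1) * ‖Dop ψ‖ + (k+1) * a ^ (k+2) * |b| * ‖(ψ : E)‖ := by
      have := hb2 (k+1)
      push_cast at this ⊢
      convert this using 3 <;> push_cast <;> ring
    have h2 : ‖c‖ ^ k * ‖Dop (pw (k+1))‖
        ≤ ‖c‖ ^ k * (a ^ (k+1) * ‖Dop ψ‖ + (k+1) * a ^ (k+2) * |b| * ‖(ψ : E)‖) :=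
      mul_le_mul_of_nonneg_left h1 (by positivity)
    have h3 : (‖c‖ * a) ^ k ≤ (1/2:ℝ) ^ k := pow_le_pow_left₀ (by positivity) hca k
    have h4 : ‖c‖ ^ k * (a ^ (k+1) * ‖Dop ψ‖ + (k+1) * a ^ (k+2) * |b| * ‖(ψ : E)‖)
        = (‖c‖ * a) ^ k * (a * ‖Dop ψ‖ + (k+1) * a^2 * |b| * ‖(ψ : E)‖) := by
      rw [mul_pow]; ring
    have h5 : (0:ℝ) ≤ a * ‖Dop ψ‖ + (k+1) * a^2 * |b| * ‖(ψ : E)‖ := by positivity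
    calc ‖c‖ ^ k * ‖Dop (pw (k+1))‖
        ≤ (‖c‖ * a) ^ k * (a * ‖Dop ψ‖ + (k+1) * a^2 * |b| * ‖(ψ : E)‖) := by
          rw [← h4]; exact h2
      _ ≤ (1/2:ℝ) ^ k * (a * ‖Dop ψ‖ + (k+1) * a^2 * |b| * ‖(ψ : E)‖) :=
          mul_le_mul_of_nonneg_right h3 h5
      _ = (a * ‖Dop ψ‖ + a^2 * |b| * ‖(ψ : E)‖) * (1/2:ℝ) ^ k
          + (a^2 * |b| * ‖(ψ : E)‖) * ((k:ℝ) * (1/2:ℝ) ^ k) := by ring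
  have hDu : ∀ n, Dop (u n) = ∑ k ∈ Finset.range n, (c ^ k) • Dop (pw (k+1)) := by
    intro n
    rw [hu]
    simp [map_sum, map_smul]
  have hv : Filter.Tendsto (fun n => Dop (u n))
      Filter.atTop (nhds (∑' k, (c ^ k) • Dop (pw (k+1)))) := by
    have h6 := hsum.hasSum.tendsto_sum_nat
    convert h6 using 1
    funext n
    exact hDu n
  exact lem_closed' dom Dop hsymm hmax u (A (ψ : E)) _ hy hv

end Aux

/-- Let `D` be a (possibly unbounded) self-adjoint operator with domain `dom`, and `H` a
bounded self-adjoint operator preserving `dom` whose commutator with `D` is bounded by `b`.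
Then for every non-real `z` and every `ψ ∈ dom`, the vector `(H-z)⁻¹ψ` lies in `dom` and
`‖D (H-z)⁻¹ ψ‖ ≤ |Im z|⁻¹ ‖Dψ‖ + |Im z|⁻² b (|Im z| + |i+z|) ‖ψ‖`. -/
theorem stmt_3 {E : Type*} [NormedAddCommGroup E] [InnerProductSpace ℂ E] [CompleteSpace E]
    (dom : Submodule ℂ E) (Dop : dom →ₗ[ℂ] E)
    -- `D` is self-adjoint: symmetric and its adjoint domain is contained in `dom`
    (hsymm : ∀ ψ φ : dom, ⟪Dop ψ, (φ : E)⟫ = ⟪(ψ : E), Dop φ⟫)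
    (hmax : ∀ y w : E, (∀ ψ : dom, ⟪Dop ψ, y⟫ = ⟪(ψ : E), w⟫) → y ∈ dom)
    (H : E →L[ℂ] E) (hH : IsSelfAdjoint H)
    (hpres : ∀ x ∈ dom, H x ∈ dom)
    (b : ℝ)
    (hcomm : ∀ ψ : dom, ‖Dop ⟨H ψ, hpres _ ψ.2⟩ - H (Dop ψ)‖ ≤ b * ‖(ψ : E)‖)
    (z : ℂ) (hz : z.im ≠ 0)
    (R : E →L[ℂ] E) (hR1 : (H - z • 1) * R = 1) (hR2 : R * (H - z • 1) = 1) :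
    ∀ ψ : dom, ∃ hmem : R (ψ : E) ∈ dom,
      ‖Dop ⟨R (ψ : E), hmem⟩‖ ≤
        |z.im|⁻¹ * ‖Dop ψ‖ + |z.im|⁻¹ ^ 2 * b * (|z.im| + ‖Complex.I + z‖) * ‖(ψ : E)‖ := by
  intro ψ
  classical
  set t₀ : ℝ := ‖H‖ + |b| + 1 with ht₀
  have ht₀pos : 0 < t₀ := by positivity
  have P : ∀ n : ℕ, ∀ w : ℂ, ∀ A : E →L[ℂ] E, (H - w • 1) * A = 1 → A * (H - w • 1) = 1 →
      t₀ ≤ 2 ^ n * |w.im| → ∀ φ : dom, A (φ : E) ∈ dom := by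
    intro n
    induction n with
    | zero =>
      intro w A hA1 hA2 hle φ
      apply lem_seed' dom Dop hsymm hmax H hpres b hcomm w _ A hA2 φ
      have h1 : |w.im| ≤ ‖w‖ := Complex.abs_im_le_norm w
      have h2 : t₀ ≤ |w.im| := by simpa using hle
      rw [ht₀] at h2
      linarith
    | succ n ih =>
      intro w A hA1 hA2 hle φ
      have hwim : w.im ≠ 0 := by
        intro h
        rw [h] at hle
        simp at hle
        linarith
      have hwabs : 0 < |w.im| := abs_pos.mpr hwim
      set w' : ℂ := w + (w.im : ℂ) * Complex.I with hw'
      have hw'im : w'.im = 2 * w.im := by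
        rw [hw']
        simp [Complex.add_im, Complex.mul_im]
        ring
      have hw'ne : w'.im ≠ 0 := by
        rw [hw'im]; intro h; exact hwim (by linarith)
      obtain ⟨A', hA'1, hA'2⟩ := lem_exists' H hH w' hw'ne
      have hle' : t₀ ≤ 2 ^ n * |w'.im| := by
        rw [hw'im, abs_mul, abs_two]
        have e : (2:ℝ)^(n+1) * |w.im| = 2^n * (2 * |w.im|) := by ring
        linarith [hle, e ▸ hle]
      have hpresA' : ∀ φ : dom, A' (φ : E) ∈ dom := ih w' A' hA'1 hA'2 hle'
      apply lem_step' dom Dop hsymm hmax H hH hpres b hcomm w w' hw'ne _ A' hA'1 hpresA' A hA2 φ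
      have h1 : w - w' = -((w.im : ℂ) * Complex.I) := by rw [hw']; ring
      have h2 : ‖w - w'‖ = |w.im| := by
        rw [h1]
        simp
      rw [h2, hw'im, abs_mul, abs_two]
      have e2 : |w.im| * (2 * |w.im|)⁻¹ = 1/2 := by
        field_simp
      linarith [e2]
  have hzpos : 0 < |z.im| := abs_pos.mpr hz
  obtain ⟨n, hn⟩ := pow_unbounded_of_one_lt (t₀ / |z.im|) (one_lt_two (α := ℝ))
  have hn' : t₀ ≤ 2 ^ n * |z.im| := by
    have h3 := (div_lt_iff₀ hzpos).mp hn
    linarith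
  have hpresR : ∀ φ : dom, R (φ : E) ∈ dom := P n z R hR1 hR2 hn'
  refine ⟨hpresR ψ, ?_⟩
  have hb2 := lem_bound' dom Dop H hH hpres b hcomm z hz R hR1 hpresR ψ
  by_cases hψ0 : (ψ : E) = 0
  · have eL : (⟨R (ψ : E), hpresR ψ⟩ : dom) = 0 := Subtype.ext (by simp [hψ0])
    have e2 : ψ = 0 := Subtype.ext hψ0
    rw [eL, e2]
    simp
  · have hbnn : 0 ≤ b := by
      have h3 := hcomm ψ
      have h4 : 0 < ‖(ψ : E)‖ := norm_pos_iff.mpr hψ0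
      nlinarith [norm_nonneg (Dop ⟨H ψ, hpres _ ψ.2⟩ - H (Dop ψ))]
    have habs : |b| = b := abs_of_nonneg hbnn
    rw [habs] at hb2
    have hK : 1 ≤ |z.im| + ‖Complex.I + z‖ := by
      have h5 : |(Complex.I + z).im| ≤ ‖Complex.I + z‖ := by
        exact Complex.abs_im_le_norm _
      have h6 : (Complex.I + z).im = 1 + z.im := by simp
      have h7 : |(1:ℝ)| ≤ |1 + z.im| + |-z.im| := by
        have h8 := abs_add_le (1 + z.im) (-z.im)
        simpa using h8
      rw [h6] at h5
      rw [abs_one, abs_neg] at h7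
      linarith
    have q0 : (0:ℝ) ≤ |z.im|⁻¹ ^ 2 := by positivity
    have main : 0 ≤ (|z.im|⁻¹ ^ 2 * b * ‖(ψ : E)‖) * ((|z.im| + ‖Complex.I + z‖) - 1) :=
      mul_nonneg (mul_nonneg (mul_nonneg q0 hbnn) (norm_nonneg _)) (by linarith)
    nlinarith [hb2, main]
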